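/- Split conformal coverage lower bound: assume α ∈ (0, 1) and k = ⌈(1−α)(N+1)⌉ ≤ N. Let τ̂ be the k-th smallest value among the calibration scores s(X_1, Y_1), …, s(X_N, Y_N), and let C_τ̂(x) = { y ∈ 𝒴 : s(x, y) ≤ τ̂ }. Then P( Y_{N+1} ∈ C_τ̂(X_{N+1}) ) ≥ 1 − α, where the probability is over the joint draw of all N+1 pairs. -/

import Mathlib

open MeasureTheory

/-- The `k`-th smallest value (1-indexed) among the values `v 0, …, v (N-1)`. -/
noncomputable def orderStat (N : ℕ) (v : Fin N → ℝ) (k : ℕ) : ℝ :=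
  (Multiset.sort (Multiset.map v Finset.univ.val) (· ≤ ·)).getD (k - 1) 0

/-- The split conformal prediction set `C_τ(x) = {y : s(x, y) ≤ τ}`. -/
def predSet {𝒳 𝒴 : Type*} (s : 𝒳 × 𝒴 → ℝ) (τ : ℝ) (x : 𝒳) : Set 𝒴 :=
  {y | s (x, y) ≤ τ}

section Aux

open Finset

/-- Sorted-list facts about the `k`-th element. -/
lemma conformal_list_aux {k : ℕ} (hk1 : 1 ≤ k) {l : List ℝ} (hsort : l.Pairwise (· ≤ ·))
    (hkl : k - 1 < l.length) :
    (∀ x : ℝ, x ≤ l.get ⟨k - 1, hkl⟩ ↔ l.countP (fun a => decide (a < x)) < k)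
    ∧ k ≤ l.countP (fun a => decide (a ≤ l.get ⟨k - 1, hkl⟩)) := by
  set t := l.get ⟨k - 1, hkl⟩ with ht
  have hsplit : l.take (k-1) ++ l.drop (k-1) = l := List.take_append_drop _ _
  have hdrop : l.drop (k-1) = t :: l.drop k := by
    rw [List.drop_eq_getElem_cons hkl]
    have : k - 1 + 1 = k := by omega
    rw [this]
    rfl
  have hpw : (l.take (k-1) ++ l.drop (k-1)).Pairwise (· ≤ ·) := by rw [hsplit]; exact hsort
  have hcross : ∀ a ∈ l.take (k-1), ∀ b ∈ l.drop (k-1), a ≤ b :=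
    (List.pairwise_append.mp hpw).2.2
  have ht_mem : t ∈ l.drop (k-1) := by rw [hdrop]; exact List.mem_cons_self
  have hdrop_sorted : (l.drop (k-1)).Pairwise (· ≤ ·) :=
    hsort.sublist (List.drop_sublist _ _)
  have hdrop_ge : ∀ b ∈ l.drop (k-1), t ≤ b := by
    intro b hb
    rw [hdrop] at hb hdrop_sorted
    rcases List.mem_cons.mp hb with h | h
    · exact le_of_eq h.symm
    · exact (List.pairwise_cons.mp hdrop_sorted).1 b h
  have hlen_take : (l.take (k-1)).length = k - 1 := by
    rw [List.length_take]; omega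
  have hsum : ∀ p : ℝ → Bool, l.countP p = (l.take (k-1)).countP p + (l.drop (k-1)).countP p := by
    intro p; rw [← List.countP_append, hsplit]
  constructor
  · intro x
    constructor
    · intro hx
      rw [hsum]
      have h2 : (l.drop (k-1)).countP (fun a => decide (a < x)) = 0 := by
        rw [List.countP_eq_zero]
        intro a ha
        simp only [decide_eq_true_eq]
        exact not_lt.mpr (le_trans hx (hdrop_ge a ha))
      have h1 : (l.take (k-1)).countP (fun a => decide (a < x)) ≤ k - 1 :=
        le_trans List.countP_le_length hlen_take.le
      omega
    · intro hcount
      by_contra hx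
      push_neg at hx
      have h1 : (l.take (k-1)).countP (fun a => decide (a < x)) = k - 1 := by
        rw [List.countP_eq_length.mpr, hlen_take]
        intro a ha
        simp only [decide_eq_true_eq]
        exact lt_of_le_of_lt (hcross a ha t ht_mem) hx
      have h2 : 0 < (l.drop (k-1)).countP (fun a => decide (a < x)) :=
        List.countP_pos_iff.mpr ⟨t, ht_mem, by simpa using hx⟩
      rw [hsum] at hcount
      omega
  · rw [hsum]
    have h1 : (l.take (k-1)).countP (fun a => decide (a ≤ t)) = k - 1 := by
      rw [List.countP_eq_length.mpr, hlen_take]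
      intro a ha
      simp only [decide_eq_true_eq]
      exact hcross a ha t ht_mem
    have h2 : 0 < (l.drop (k-1)).countP (fun a => decide (a ≤ t)) :=
      List.countP_pos_iff.mpr ⟨t, ht_mem, by simp⟩
    omega

lemma conformal_countP_sort {n : ℕ} (v : Fin n → ℝ) (p : ℝ → Prop) [DecidablePred p] :
    (Multiset.sort (Multiset.map v Finset.univ.val) (· ≤ ·)).countP (fun a => decide (p a))
      = (univ.filter fun j => p (v j)).card := by
  have h1 : (Multiset.sort (Multiset.map v Finset.univ.val) (· ≤ ·)).countP
      (fun a => decide (p a))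
      = Multiset.countP p ((Multiset.sort (Multiset.map v Finset.univ.val) (· ≤ ·)) : Multiset ℝ) :=
    (Multiset.coe_countP _ _).symm
  rw [h1, Multiset.sort_eq, Multiset.countP_map]
  rfl

lemma orderStat_le_iff {n k : ℕ} (hk1 : 1 ≤ k) (hkn : k ≤ n) (v : Fin n → ℝ) (x : ℝ) :
    x ≤ orderStat n v k ↔ (univ.filter fun j => v j < x).card < k := by
  set l := Multiset.sort (Multiset.map v Finset.univ.val) (· ≤ ·) with hl
  have hlen : l.length = n := by simp [hl]
  have hkl : k - 1 < l.length := by omega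
  have hgetD : orderStat n v k = l.get ⟨k - 1, hkl⟩ := by
    rw [orderStat, ← hl, List.getD_eq_getElem _ _ hkl]
    rfl
  rw [hgetD, (conformal_list_aux hk1 (Multiset.pairwise_sort _ _) hkl).1 x,
    conformal_countP_sort v (· < x)]

lemma conformal_card_rank_lt {n k : ℕ} (hk1 : 1 ≤ k) (hkn : k ≤ n) (v : Fin n → ℝ) :
    k ≤ (univ.filter fun i => (univ.filter fun j => v j < v i).card < k).card := by
  set t := orderStat n v k with htdef
  have hcongr : (univ.filter fun i => (univ.filter fun j => v j < v i).card < k)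
      = (univ.filter fun i => v i ≤ t) := by
    apply Finset.filter_congr
    intro i _
    exact (orderStat_le_iff hk1 hkn v (v i)).symm
  rw [hcongr, ← conformal_countP_sort v (· ≤ t)]
  set l := Multiset.sort (Multiset.map v Finset.univ.val) (· ≤ ·) with hl
  have hlen : l.length = n := by simp [hl]
  have hkl : k - 1 < l.length := by omega
  have hgetD : t = l.get ⟨k - 1, hkl⟩ := by
    rw [htdef, orderStat, ← hl, List.getD_eq_getElem _ _ hkl]; rfl
  rw [hgetD]
  exact (conformal_list_aux hk1 (Multiset.pairwise_sort _ _) hkl).2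

lemma conformal_card_filter_last {N : ℕ} (w : Fin (N+1) → ℝ) :
    (univ.filter fun j : Fin (N+1) => w j < w (Fin.last N)).card
      = (univ.filter fun j : Fin N => w j.castSucc < w (Fin.last N)).card := by
  rw [Finset.card_filter, Finset.card_filter, Fin.sum_univ_castSucc]
  simp

lemma conformal_map_eq_pi {Ω : Type*} [MeasurableSpace Ω] (P : Measure Ω)
    [IsProbabilityMeasure P]
    {n : ℕ} (S : Fin n → Ω → ℝ) (hS : ∀ i, Measurable (S i))
    (hindep : ProbabilityTheory.iIndepFun S P)
    (ν : Measure ℝ) [IsProbabilityMeasure ν]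
    (hident : ∀ i, Measure.map (S i) P = ν) :
    Measure.map (fun ω i => S i ω) P = Measure.pi (fun _ => ν) := by
  refine (Measure.pi_eq (μ := fun _ : Fin n => ν) fun t ht => ?_).symm
  rw [Measure.map_apply (measurable_pi_lambda _ hS) (MeasurableSet.univ_pi ht)]
  have hpre : (fun ω i => S i ω) ⁻¹' Set.pi Set.univ t = ⋂ i ∈ Finset.univ, S i ⁻¹' t i := by
    ext ω; simp [Set.mem_pi]
  rw [hpre, hindep.measure_inter_preimage_eq_mul Finset.univ (fun i _ => ht i)]
  refine Finset.prod_congr rfl fun i _ => ?_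
  rw [← hident i, Measure.map_apply (hS i) (ht i)]

lemma conformal_pi_map_perm (ν : Measure ℝ) [IsProbabilityMeasure ν] {n : ℕ}
    (σ : Equiv.Perm (Fin n)) :
    Measure.map (fun v : Fin n → ℝ => fun j => v (σ j)) (Measure.pi fun _ => ν)
      = Measure.pi (fun _ => ν) := by
  have hmeas : Measurable (fun v : Fin n → ℝ => fun j => v (σ j)) :=
    measurable_pi_lambda _ fun j => measurable_pi_apply (σ j)
  refine (Measure.pi_eq (μ := fun _ : Fin n => ν) fun t ht => ?_).symm
  rw [Measure.map_apply hmeas (MeasurableSet.univ_pi ht)]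
  have hpre : (fun v : Fin n → ℝ => fun j => v (σ j)) ⁻¹' Set.pi Set.univ t
      = Set.pi Set.univ (fun j => t (σ.symm j)) := by
    ext v
    simp only [Set.mem_preimage, Set.mem_pi, Set.mem_univ, forall_true_left, true_implies]
    exact ⟨fun h j => by simpa using h (σ.symm j), fun h j => by simpa using h (σ j)⟩
  rw [hpre, Measure.pi_pi]
  exact Equiv.prod_comp σ.symm fun j => ν (t j)

lemma conformal_measurable_rank {n : ℕ} (k : ℕ) (i : Fin n) :
    MeasurableSet {v : Fin n → ℝ | (univ.filter fun j => v j < v i).card < k} := by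
  have hf : Measurable fun v : Fin n → ℝ => (univ.filter fun j => v j < v i).card := by
    have : (fun v : Fin n → ℝ => (univ.filter fun j => v j < v i).card)
        = fun v => ∑ j, if v j < v i then 1 else 0 := by
      funext v; exact Finset.card_filter _ _
    rw [this]
    exact Finset.measurable_sum _ fun j _ => Measurable.ite
      (measurableSet_lt (measurable_pi_apply j) (measurable_pi_apply i))
      measurable_const measurable_const
  exact hf (measurableSet_Iio (a := k))

end Aux

theorem split_conformal_coverage_lower_bound
    {Ω : Type*} [MeasurableSpace Ω] (P : Measure Ω) [IsProbabilityMeasure P]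
    {𝒳 : Type*} [MeasurableSpace 𝒳]
    {𝒴 : Type*} [Fintype 𝒴] [Nonempty 𝒴] [MeasurableSpace 𝒴]
    (N : ℕ) (hN : 1 ≤ N)
    (X : Fin (N + 1) → Ω → 𝒳) (Y : Fin (N + 1) → Ω → 𝒴)
    (hX : ∀ i, Measurable (X i)) (hY : ∀ i, Measurable (Y i))
    (hindep : ProbabilityTheory.iIndepFun
      (fun i ω => (X i ω, Y i ω)) P)
    (hident : ∀ i, Measure.map (fun ω => (X i ω, Y i ω)) P
      = Measure.map (fun ω => (X 0 ω, Y 0 ω)) P)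
    (s : 𝒳 × 𝒴 → ℝ) (hs : Measurable s)
    (α : ℝ) (hα0 : 0 < α) (hα1 : α < 1)
    (k : ℕ) (hk : k = ⌈(1 - α) * (N + 1 : ℝ)⌉₊) (hkN : k ≤ N) :
    ENNReal.ofReal (1 - α)
      ≤ P {ω | Y (Fin.last N) ω ∈
            predSet s
              (orderStat N (fun i => s (X i.castSucc ω, Y i.castSucc ω)) k)
              (X (Fin.last N) ω)} := by
  classical
  open Finset in
  have hk1 : 1 ≤ k := by
    rw [hk]
    refine Nat.one_le_iff_ne_zero.mpr (Nat.ceil_pos.mpr ?_).ne'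
    have h1 : (0:ℝ) < 1 - α := by linarith
    have h2 : (0:ℝ) < (N:ℝ) + 1 := by positivity
    exact mul_pos h1 h2
  set S : Fin (N+1) → Ω → ℝ := fun i ω => s (X i ω, Y i ω) with hSdef
  have hS : ∀ i, Measurable (S i) := fun i => hs.comp ((hX i).prodMk (hY i))
  have hSindep : ProbabilityTheory.iIndepFun S P :=
    hindep.comp (fun _ => s) (fun _ => hs)
  set ν : Measure ℝ := Measure.map (S 0) P with hν
  haveI : IsProbabilityMeasure ν := Measure.isProbabilityMeasure_map (hS 0).aemeasurable
  have hSid : ∀ i, Measure.map (S i) P = ν := by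
    intro i
    calc Measure.map (S i) P
        = Measure.map s (Measure.map (fun ω => (X i ω, Y i ω)) P) :=
          (Measure.map_map hs ((hX i).prodMk (hY i))).symm
      _ = Measure.map s (Measure.map (fun ω => (X 0 ω, Y 0 ω)) P) := by rw [hident i]
      _ = ν := Measure.map_map hs ((hX 0).prodMk (hY 0))
  set J : Ω → Fin (N+1) → ℝ := fun ω i => S i ω with hJ
  have hJm : Measurable J := measurable_pi_lambda _ hS
  set μ := Measure.pi (fun _ : Fin (N+1) => ν) with hμ
  have hmap : Measure.map J P = μ := conformal_map_eq_pi P S hS hSindep ν hSid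
  haveI : IsProbabilityMeasure μ := by rw [hμ]; infer_instance
  set B : Fin (N+1) → Set (Fin (N+1) → ℝ) :=
    fun i => {v | (Finset.univ.filter fun j => v j < v i).card < k} with hB
  have hBm : ∀ i, MeasurableSet (B i) := fun i => conformal_measurable_rank k i
  -- symmetry
  have hsym : ∀ i, μ (B i) = μ (B (Fin.last N)) := by
    intro i
    set σ : Equiv.Perm (Fin (N+1)) := Equiv.swap i (Fin.last N) with hσ
    set T : (Fin (N+1) → ℝ) → (Fin (N+1) → ℝ) := fun v j => v (σ j) with hT
    have hTm : Measurable T := measurable_pi_lambda _ fun j => measurable_pi_apply (σ j)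
    have hpre : T ⁻¹' B (Fin.last N) = B i := by
      ext v
      simp only [hB, hT, Set.mem_preimage, Set.mem_setOf_eq]
      have hσl : σ (Fin.last N) = i := Equiv.swap_apply_right i (Fin.last N)
      have hcard : (Finset.univ.filter fun j => v (σ j) < v (σ (Fin.last N))).card
          = (Finset.univ.filter fun j => v j < v i).card := by
        refine Finset.card_equiv σ fun j => ?_
        simp [hσl]
      exact iff_of_eq (congrArg (fun c => c < k) hcard)
    calc μ (B i) = μ (T ⁻¹' B (Fin.last N)) := by rw [hpre]
      _ = (Measure.map T μ) (B (Fin.last N)) := (Measure.map_apply hTm (hBm _)).symm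
      _ = μ (B (Fin.last N)) := by rw [hμ, conformal_pi_map_perm]
  -- sum bound
  have hsum : (k : ENNReal) ≤ ∑ i, μ (B i) := by
    have hpt : ∀ v : Fin (N+1) → ℝ,
        (k : ENNReal) ≤ ∑ i, (B i).indicator (fun _ => (1:ENNReal)) v := by
      intro v
      have hcard : k ≤ (Finset.univ.filter fun i => v ∈ B i).card := by
        have := conformal_card_rank_lt (n := N+1) hk1 (by omega) v
        simpa [hB, Set.mem_setOf_eq] using this
      calc (k:ENNReal) ≤ ((Finset.univ.filter fun i => v ∈ B i).card : ENNReal) := by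
            exact_mod_cast hcard
        _ = ∑ i, (B i).indicator (fun _ => (1:ENNReal)) v := by
            rw [Finset.card_filter]
            push_cast
            refine Finset.sum_congr rfl fun i _ => ?_
            by_cases h : v ∈ B i <;> simp [h, Set.indicator]
    calc (k : ENNReal) = ∫⁻ _, (k:ENNReal) ∂μ := by simp
      _ ≤ ∫⁻ v, ∑ i, (B i).indicator (fun _ => 1) v ∂μ := lintegral_mono hpt
      _ = ∑ i, ∫⁻ v, (B i).indicator (fun _ => 1) v ∂μ :=
          lintegral_finset_sum _ fun i _ => measurable_const.indicator (hBm i)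
      _ = ∑ i, μ (B i) := Finset.sum_congr rfl fun i _ => lintegral_indicator_one (hBm i)
  have hsum' : (k : ENNReal) ≤ ((N:ENNReal)+1) * μ (B (Fin.last N)) := by
    calc (k:ENNReal) ≤ ∑ i, μ (B i) := hsum
      _ = ∑ _i : Fin (N+1), μ (B (Fin.last N)) := Finset.sum_congr rfl fun i _ => hsym i
      _ = ((N:ENNReal)+1) * μ (B (Fin.last N)) := by
          simp [Finset.sum_const, Finset.card_univ, mul_comm]
  -- identify the event
  have hevent : {ω | Y (Fin.last N) ω ∈
        predSet s (orderStat N (fun i => s (X i.castSucc ω, Y i.castSucc ω)) k)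
          (X (Fin.last N) ω)} = J ⁻¹' B (Fin.last N) := by
    ext ω
    show s (X (Fin.last N) ω, Y (Fin.last N) ω)
        ≤ orderStat N (fun i => s (X i.castSucc ω, Y i.castSucc ω)) k
      ↔ (Finset.univ.filter fun j => J ω j < J ω (Fin.last N)).card < k
    rw [orderStat_le_iff hk1 hkN (fun i : Fin N => s (X i.castSucc ω, Y i.castSucc ω))
      (s (X (Fin.last N) ω, Y (Fin.last N) ω))]
    exact Iff.symm (iff_of_eq (congrArg (fun c => c < k) (conformal_card_filter_last (J ω))))
  rw [hevent]
  have hPB : P (J ⁻¹' B (Fin.last N)) = μ (B (Fin.last N)) := by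
    rw [← Measure.map_apply hJm (hBm _), hmap]
  rw [hPB]
  have hNtop : ((N:ENNReal)+1) ≠ ⊤ := by simp
  have hN0 : ((N:ENNReal)+1) ≠ 0 := by simp
  rw [← ENNReal.mul_le_mul_iff_left hN0 hNtop]
  calc ENNReal.ofReal (1-α) * ((N:ENNReal)+1)
      = ENNReal.ofReal ((1-α) * ((N:ℝ)+1)) := by
        rw [ENNReal.ofReal_mul (by linarith)]
        congr 1
        have h : ((N:ℝ)+1) = ((N+1 : ℕ):ℝ) := by push_cast; ring
        rw [h, ENNReal.ofReal_natCast]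
        push_cast
        ring
    _ ≤ (k:ENNReal) := by
        rw [← ENNReal.ofReal_natCast k]
        apply ENNReal.ofReal_le_ofReal
        rw [hk]
        exact Nat.le_ceil _
    _ ≤ ((N:ENNReal)+1) * μ (B (Fin.last N)) := hsum'
    _ = μ (B (Fin.last N)) * ((N:ENNReal)+1) := mul_comm _ _
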